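/- arXiv:2505.00258 — 3 statements merged into one kernel-verified Lean document; each statement's English description precedes it below -/
import Mathlib

section
/- (Alternative one-step dqRK contraction.) Let β < q₀ < q < 1 − β with q − q₀ > β and q₀m, qm, βm integers. Suppose A x* = b_t, b = b_t + ξ with ‖ξ‖₀ ≤ βm, and x_k ∈ ℝⁿ satisfies ⟨x_k, a_j⟩ = b_j for some j. Let B be a set of exactly (q − q₀)m indices with Q₀ ≤ |r_j| ≤ Q for all j ∈ B (obtained by removing from the qm indices at or below the q-quantile a set of q₀m indices at or below the q₀-quantile). Then (1/((q−q₀)m)) Σ_{i∈B} ‖(x_k + r_i a_i) − x*‖² ≤ (1 − C)·‖x_k − x*‖², where C := (q − q₀ − β)·(σ_{q−β,min}(A)²/((q−q₀)q m) + σ_{q₀−β,min}(A)²/((q−q₀)q₀ q m²)) − (β/(q−q₀))·(1 + 2σ_max(A)²/(m(1 − q − β))). Moreover, if (q/(q−q₀−β))·(βm/σ_max(A)² + 2β/(1 − q − β)) < (σ_{q−β,min}(A)² + σ_{q₀−β,min}(A)²/(q₀m))/σ_max(A)², then C > 0. -/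
open Finset

/-- Largest singular value of `A`, as the operator norm of the associated
Euclidean linear map. -/
noncomputable def sigmaMax {m n : ℕ} (A : Matrix (Fin m) (Fin n) ℝ) : ℝ :=
  ‖LinearMap.toContinuousLinearMap (Matrix.toEuclideanLin A)‖

/-- `sigmaSMin A k` is the minimum over all index sets `I` of cardinality `k`
of the smallest value of `‖A_I x‖` over unit vectors `x`. -/
noncomputable def sigmaSMin {m n : ℕ} (A : Matrix (Fin m) (Fin n) ℝ) (k : ℕ) : ℝ :=
  sInf {t : ℝ | ∃ I : Finset (Fin m), I.card = k ∧
    t = sInf {u : ℝ | ∃ x : EuclideanSpace ℝ (Fin n), ‖x‖ = 1 ∧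
      u = Real.sqrt (∑ i ∈ I, (A.mulVec (fun k => x k) i) ^ 2)}}

/-- The `j`-th row of `A`, as a vector in Euclidean space. -/
noncomputable def row {m n : ℕ} (A : Matrix (Fin m) (Fin n) ℝ) (j : Fin m) :
    EuclideanSpace ℝ (Fin n) := WithLp.toLp 2 (fun k => A j k)

/-- Residual `r_j = b_j - ⟨x, a_j⟩`. -/
noncomputable def resid {m n : ℕ} (A : Matrix (Fin m) (Fin n) ℝ) (b : Fin m → ℝ)
    (x : EuclideanSpace ℝ (Fin n)) (j : Fin m) : ℝ :=
  b j - ∑ k, x k * A j k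

/-- `IsQuantile f k Q` says `Q` is the `k`-th smallest value (1-indexed,
counted with multiplicity) of the multiset `{f j}`. -/
def IsQuantile {m : ℕ} (f : Fin m → ℝ) (k : ℕ) (Q : ℝ) : Prop :=
  k ≤ (Finset.univ.filter fun j => f j ≤ Q).card ∧
  (Finset.univ.filter fun j => f j < Q).card < k

lemma inner_sInf_nonneg {m n : ℕ} (A : Matrix (Fin m) (Fin n) ℝ) (I : Finset (Fin m)) :
    0 ≤ sInf {u : ℝ | ∃ x : EuclideanSpace ℝ (Fin n), ‖x‖ = 1 ∧
      u = Real.sqrt (∑ i ∈ I, (A.mulVec (fun k => x k) i) ^ 2)} := by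
  apply Real.sInf_nonneg
  rintro u ⟨x, -, rfl⟩
  exact Real.sqrt_nonneg _

lemma sigmaSMin_nonneg {m n : ℕ} (A : Matrix (Fin m) (Fin n) ℝ) (k : ℕ) :
    0 ≤ sigmaSMin A k := by
  apply Real.sInf_nonneg
  rintro t ⟨I, -, rfl⟩
  exact inner_sInf_nonneg A I

lemma sigma_le_sum {m n : ℕ} (A : Matrix (Fin m) (Fin n) ℝ) (k : ℕ)
    (I : Finset (Fin m)) (hI : k ≤ I.card) (d : EuclideanSpace ℝ (Fin n)) :
    sigmaSMin A k ^ 2 * ‖d‖ ^ 2 ≤ ∑ i ∈ I, (∑ j, d j * A i j) ^ 2 := by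
  rcases eq_or_ne d 0 with rfl | hd
  · simp
  · obtain ⟨I', hI'sub, hI'card⟩ := Finset.exists_subset_card_eq hI
    set x : EuclideanSpace ℝ (Fin n) := ‖d‖⁻¹ • d with hx
    have hnd : (0:ℝ) < ‖d‖ := norm_pos_iff.mpr hd
    have hxnorm : ‖x‖ = 1 := by
      rw [hx, norm_smul, norm_inv, norm_norm, inv_mul_cancel₀ hnd.ne']
    have hmem : Real.sqrt (∑ i ∈ I', (A.mulVec (fun k => x k) i) ^ 2) ∈
        {u : ℝ | ∃ x : EuclideanSpace ℝ (Fin n), ‖x‖ = 1 ∧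
          u = Real.sqrt (∑ i ∈ I', (A.mulVec (fun k => x k) i) ^ 2)} := ⟨x, hxnorm, rfl⟩
    have h1 : sInf {u : ℝ | ∃ x : EuclideanSpace ℝ (Fin n), ‖x‖ = 1 ∧
          u = Real.sqrt (∑ i ∈ I', (A.mulVec (fun k => x k) i) ^ 2)} ≤
        Real.sqrt (∑ i ∈ I', (A.mulVec (fun k => x k) i) ^ 2) := by
      apply csInf_le _ hmem
      exact ⟨0, by rintro u ⟨y, -, rfl⟩; exact Real.sqrt_nonneg _⟩
    have h2 : sigmaSMin A k ≤ sInf {u : ℝ | ∃ x : EuclideanSpace ℝ (Fin n), ‖x‖ = 1 ∧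
          u = Real.sqrt (∑ i ∈ I', (A.mulVec (fun k => x k) i) ^ 2)} := by
      apply csInf_le
      · exact ⟨0, by rintro t ⟨J, -, rfl⟩; exact inner_sInf_nonneg A J⟩
      · exact ⟨I', hI'card, rfl⟩
    have h3 : sigmaSMin A k ≤ Real.sqrt (∑ i ∈ I', (A.mulVec (fun k => x k) i) ^ 2) :=
      h2.trans h1
    have h4 : sigmaSMin A k ^ 2 ≤ ∑ i ∈ I', (A.mulVec (fun k => x k) i) ^ 2 := by
      have := pow_le_pow_left₀ (sigmaSMin_nonneg A k) h3 2
      rwa [Real.sq_sqrt (by positivity)] at this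
    have h5 : ∀ i, A.mulVec (fun k => x k) i * ‖d‖ = ∑ j, d j * A i j := by
      intro i
      simp only [hx, Matrix.mulVec, dotProduct, PiLp.smul_apply, smul_eq_mul]
      rw [Finset.sum_mul]
      apply Finset.sum_congr rfl
      intro j _
      field_simp
    calc sigmaSMin A k ^ 2 * ‖d‖ ^ 2 ≤ (∑ i ∈ I', (A.mulVec (fun k => x k) i) ^ 2) * ‖d‖ ^ 2 := by
          apply mul_le_mul_of_nonneg_right h4 (by positivity)
      _ = ∑ i ∈ I', (∑ j, d j * A i j) ^ 2 := by
          rw [Finset.sum_mul]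
          apply Finset.sum_congr rfl
          intro i _
          rw [← h5 i]; ring
      _ ≤ ∑ i ∈ I, (∑ j, d j * A i j) ^ 2 := by
          apply Finset.sum_le_sum_of_subset_of_nonneg hI'sub
          intro i _ _; positivity

lemma norm_toEuclideanLin_sq {m n : ℕ} (A : Matrix (Fin m) (Fin n) ℝ)
    (d : EuclideanSpace ℝ (Fin n)) :
    ‖(Matrix.toEuclideanLin A) d‖ ^ 2 = ∑ i, (∑ j, d j * A i j) ^ 2 := by
  rw [EuclideanSpace.norm_eq, Real.sq_sqrt (by positivity)]
  apply Finset.sum_congr rfl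
  intro i _
  rw [Matrix.toEuclideanLin_apply]
  simp [Matrix.mulVec, dotProduct, Real.norm_eq_abs, sq_abs, mul_comm]

lemma sum_le_sigmaMax {m n : ℕ} (A : Matrix (Fin m) (Fin n) ℝ)
    (I : Finset (Fin m)) (d : EuclideanSpace ℝ (Fin n)) :
    ∑ i ∈ I, (∑ j, d j * A i j) ^ 2 ≤ sigmaMax A ^ 2 * ‖d‖ ^ 2 := by
  have h1 : ∑ i ∈ I, (∑ j, d j * A i j) ^ 2 ≤ ∑ i, (∑ j, d j * A i j) ^ 2 :=
    Finset.sum_le_sum_of_subset_of_nonneg (Finset.subset_univ I) (fun i _ _ => by positivity)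
  rw [← norm_toEuclideanLin_sq] at h1
  refine h1.trans ?_
  have h2 : ‖(Matrix.toEuclideanLin A) d‖ ≤ sigmaMax A * ‖d‖ := by
    have := ContinuousLinearMap.le_opNorm (LinearMap.toContinuousLinearMap (Matrix.toEuclideanLin A)) d
    simpa [sigmaMax] using this
  calc ‖(Matrix.toEuclideanLin A) d‖ ^ 2 ≤ (sigmaMax A * ‖d‖) ^ 2 := by
        apply pow_le_pow_left₀ (norm_nonneg _) h2
    _ = sigmaMax A ^ 2 * ‖d‖ ^ 2 := by ring

lemma sigmaMax_pos {m n : ℕ} (A : Matrix (Fin m) (Fin n) ℝ) (hm : 0 < m)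
    (hrow : ∀ j, ∑ k, (A j k) ^ 2 = 1) : 0 < sigmaMax A := by
  obtain ⟨j₀⟩ : Nonempty (Fin m) := ⟨⟨0, hm⟩⟩
  have h1 := hrow j₀
  have hA : ∃ k, A j₀ k ≠ 0 := by
    by_contra h
    push_neg at h
    simp [h] at h1
  obtain ⟨k₀, hk₀⟩ := hA
  set e : EuclideanSpace ℝ (Fin n) := EuclideanSpace.single k₀ 1 with he
  have hnorm : ‖e‖ = 1 := by rw [he, EuclideanSpace.norm_single]; norm_num
  have h2 : (A j₀ k₀) ^ 2 ≤ ∑ i, (∑ j, e j * A i j) ^ 2 := by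
    have : ∑ j, e j * A j₀ j = A j₀ k₀ := by
      simp [he, EuclideanSpace.single_apply]
    calc (A j₀ k₀) ^ 2 = (∑ j, e j * A j₀ j) ^ 2 := by rw [this]
      _ ≤ ∑ i, (∑ j, e j * A i j) ^ 2 :=
        Finset.single_le_sum (f := fun i => (∑ j, e j * A i j) ^ 2)
          (fun i _ => by positivity) (Finset.mem_univ j₀)
  have h3 := sum_le_sigmaMax A Finset.univ e
  rw [hnorm] at h3
  have hnn : (0:ℝ) ≤ sigmaMax A := norm_nonneg _
  rcases hnn.lt_or_eq with h | h
  · exact h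
  · rw [← h] at h3
    have hpos : 0 < A j₀ k₀ ^ 2 := pow_pos (abs_pos.mpr hk₀) 2 |>.trans_le (le_of_eq (by rw [sq_abs]))
    nlinarith


set_option maxHeartbeats 2000000 in
theorem dqrk_one_step_contraction
    {m n : ℕ} (A : Matrix (Fin m) (Fin n) ℝ)
    (q₀ q β : ℝ) (kq₀ kq kβ : ℕ)
    (hm : 0 < m) (hmn : n ≤ m) (hrank : A.rank = n)
    (hrow : ∀ j, ∑ k, (A j k) ^ 2 = 1)
    (hβq₀ : β < q₀) (hq₀q : q₀ < q) (hq1 : q < 1 - β) (hgap : q - q₀ > β)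
    (hkq₀ : (kq₀ : ℝ) = q₀ * m) (hkq : (kq : ℝ) = q * m) (hkβ : (kβ : ℝ) = β * m)
    (xstar : EuclideanSpace ℝ (Fin n)) (bt b ξ : Fin m → ℝ)
    (hsol : A.mulVec (fun k => xstar k) = bt)
    (hb : b = bt + ξ)
    (hsparse : (Finset.univ.filter fun j => ξ j ≠ 0).card ≤ kβ)
    (xk : EuclideanSpace ℝ (Fin n))
    (hsolve : ∃ j, ∑ k, xk k * A j k = b j)
    (Q₀ Q : ℝ)
    (hQ₀ : IsQuantile (fun j => |resid A b xk j|) kq₀ Q₀)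
    (hQ : IsQuantile (fun j => |resid A b xk j|) kq Q)
    (B : Finset (Fin m)) (hBcard : B.card = kq - kq₀)
    (hBQ : ∀ j ∈ B, Q₀ ≤ |resid A b xk j| ∧ |resid A b xk j| ≤ Q)
    (hBstruct : ∃ Bq B₀ : Finset (Fin m), B₀ ⊆ Bq ∧ Bq.card = kq ∧ B₀.card = kq₀ ∧
      (∀ j ∈ Bq, |resid A b xk j| ≤ Q) ∧ (∀ j ∈ B₀, |resid A b xk j| ≤ Q₀) ∧
      B = Bq \ B₀)
    (C : ℝ)
    (hC : C = (q - q₀ - β) *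
        (sigmaSMin A (kq - kβ) ^ 2 / ((q - q₀) * q * m) +
          sigmaSMin A (kq₀ - kβ) ^ 2 / ((q - q₀) * q₀ * q * m ^ 2)) -
      (β / (q - q₀)) * (1 + 2 * sigmaMax A ^ 2 / (m * (1 - q - β)))) :
    (1 / ((q - q₀) * m)) *
        ∑ i ∈ B, ‖(xk + resid A b xk i • row A i) - xstar‖ ^ 2 ≤
      (1 - C) * ‖xk - xstar‖ ^ 2 ∧
    ((q / (q - q₀ - β)) * (β * m / sigmaMax A ^ 2 + 2 * β / (1 - q - β)) <
        (sigmaSMin A (kq - kβ) ^ 2 + sigmaSMin A (kq₀ - kβ) ^ 2 / (q₀ * m)) /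
          sigmaMax A ^ 2 → 0 < C) := by
  classical
  obtain ⟨Bq, B₀, hB₀sub, hBqcard, hB₀card, hBqQ, hB₀Q, hBeq⟩ := hBstruct
  have hm' : (0:ℝ) < m := Nat.cast_pos.mpr hm
  have hmne : (m:ℝ) ≠ 0 := hm'.ne'
  have hβ0 : 0 ≤ β := by
    by_contra h
    push_neg at h
    have h1 : (kβ:ℝ) < 0 := by rw [hkβ]; exact mul_neg_of_neg_of_pos h hm'
    have h2 : (0:ℝ) ≤ (kβ:ℝ) := Nat.cast_nonneg _
    linarith
  have hq₀pos : 0 < q₀ := lt_of_le_of_lt hβ0 hβq₀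
  have hqpos : 0 < q := hq₀pos.trans hq₀q
  have hkβkq₀ : kβ < kq₀ := by
    have : (kβ:ℝ) < kq₀ := by rw [hkβ, hkq₀]; nlinarith
    exact_mod_cast this
  have hkq₀kq : kq₀ < kq := by
    have : (kq₀:ℝ) < kq := by rw [hkq₀, hkq]; nlinarith
    exact_mod_cast this
  have hkk : kq₀ + kβ < kq := by
    have : (kq₀:ℝ) + kβ < kq := by rw [hkq₀, hkβ, hkq]; nlinarith
    exact_mod_cast (by push_cast at this ⊢; exact this : ((kq₀ + kβ : ℕ):ℝ) < (kq:ℝ))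
  have hkqm : kq + kβ < m := by
    have : (kq:ℝ) + kβ < m := by rw [hkq, hkβ]; nlinarith
    exact_mod_cast (by push_cast at this ⊢; exact this : ((kq + kβ : ℕ):ℝ) < (m:ℝ))
  have hkq₀pos : (0:ℝ) < kq₀ := by exact_mod_cast Nat.pos_of_ne_zero (by omega)
  have hkqposn : 0 < kq := by omega
  have hkqpos : (0:ℝ) < kq := by exact_mod_cast hkqposn
  have hkβ0 : (0:ℝ) ≤ kβ := Nat.cast_nonneg _
  -- real abbreviations
  set σ1 : ℝ := sigmaSMin A (kq - kβ) with hσ1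
  set σ2 : ℝ := sigmaSMin A (kq₀ - kβ) with hσ2
  set σm : ℝ := sigmaMax A with hσm
  have hσmpos : 0 < σm := sigmaMax_pos A hm hrow
  set aR : ℝ := (kq:ℝ) - kq₀ - kβ with haR
  have haR1 : 1 ≤ aR := by
    have : ((kq₀ + kβ + 1 : ℕ):ℝ) ≤ (kq:ℝ) := Nat.cast_le.mpr (by omega)
    push_cast at this
    rw [haR]; linarith
  have haR0 : 0 ≤ aR := by linarith
  set WR : ℝ := (m:ℝ) - kq - kβ with hWR
  have hWR1 : 1 ≤ WR := by
    have : ((kq + kβ + 1 : ℕ):ℝ) ≤ (m:ℝ) := Nat.cast_le.mpr (by omega)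
    push_cast at this
    rw [hWR]; linarith
  have hWRpos : 0 < WR := by linarith
  set d : EuclideanSpace ℝ (Fin n) := xk - xstar with hdd
  set D : ℝ := ‖d‖^2 with hD
  have hD0 : 0 ≤ D := by rw [hD]; positivity
  set e : Fin m → ℝ := fun j => ∑ k, d k * A j k with he
  set r : Fin m → ℝ := resid A b xk with hrr
  have hbtj : ∀ j, bt j = ∑ k, A j k * xstar k := by
    intro j
    rw [← hsol]
    rfl
  have hre : ∀ j, r j = ξ j - e j := by
    intro j
    have hd' : ∀ k, d k = xk k - xstar k := fun k => rfl
    simp only [hrr, resid, he, hb, Pi.add_apply, hbtj j]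
    have : ∑ k, d k * A j k = ∑ k, xk k * A j k - ∑ k, xstar k * A j k := by
      rw [← Finset.sum_sub_distrib]
      exact Finset.sum_congr rfl fun k _ => by rw [hd']; ring
    rw [this]
    have : ∑ k, A j k * xstar k = ∑ k, xstar k * A j k :=
      Finset.sum_congr rfl fun k _ => mul_comm _ _
    rw [this]
    ring
  have hrownorm : ∀ i, ‖row A i‖ = 1 := by
    intro i
    rw [EuclideanSpace.norm_eq]
    have h1 : ∀ k : Fin n, ‖row A i k‖^2 = (A i k)^2 := fun k => by
      simp [row, Real.norm_eq_abs, sq_abs]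
    rw [Finset.sum_congr rfl fun k _ => h1 k, hrow i, Real.sqrt_one]
  have hinner : ∀ i, (inner ℝ d (row A i) : ℝ) = e i := by
    intro i
    rw [PiLp.inner_apply]
    simp [row, he, RCLike.inner_apply, mul_comm]
  have heD : ∀ i, (e i)^2 ≤ D := by
    intro i
    have h2 : |(inner ℝ d (row A i) : ℝ)| ≤ ‖d‖ * ‖row A i‖ := abs_real_inner_le_norm d (row A i)
    rw [hrownorm i, mul_one, hinner i] at h2
    calc (e i)^2 = |e i|^2 := (sq_abs _).symm
      _ ≤ ‖d‖^2 := pow_le_pow_left₀ (abs_nonneg _) h2 2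
      _ = D := hD.symm
  have hstep : ∀ i ∈ B, ‖(xk + r i • row A i) - xstar‖^2 = D + (ξ i)^2 - (e i)^2 := by
    intro i _
    have hrearr : (xk + r i • row A i) - xstar = d + r i • row A i := by
      rw [hdd]; abel
    rw [hrearr, norm_add_sq_real, real_inner_smul_right, hinner i, norm_smul,
      hrownorm i, Real.norm_eq_abs, mul_one, sq_abs, hre i, ← hD]
    ring
  have hsum : ∑ i ∈ B, ‖(xk + r i • row A i) - xstar‖^2
      = (B.card : ℝ) * D + ∑ i ∈ B, (ξ i)^2 - ∑ i ∈ B, (e i)^2 := by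
    rw [Finset.sum_congr rfl hstep, Finset.sum_sub_distrib, Finset.sum_add_distrib,
      Finset.sum_const, nsmul_eq_mul]
  -- quantile nonnegativity
  have hQ₀1 : kq₀ ≤ (Finset.univ.filter fun j => |r j| ≤ Q₀).card := hQ₀.1
  have hQ2' : (Finset.univ.filter fun j => |r j| < Q).card < kq := hQ.2
  have hQ₀0 : 0 ≤ Q₀ := by
    have hne : (Finset.univ.filter fun j => |r j| ≤ Q₀).Nonempty := by
      rw [← Finset.card_pos]; omega
    obtain ⟨j, hj⟩ := hne
    exact (abs_nonneg _).trans (Finset.mem_filter.mp hj).2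
  have hQ1 : kq ≤ (Finset.univ.filter fun j => |r j| ≤ Q).card := hQ.1
  have hQ0 : 0 ≤ Q := by
    have hne : (Finset.univ.filter fun j => |r j| ≤ Q).Nonempty := by
      rw [← Finset.card_pos]; omega
    obtain ⟨j, hj⟩ := hne
    exact (abs_nonneg _).trans (Finset.mem_filter.mp hj).2
  -- corrupted set
  set S : Finset (Fin m) := Finset.univ.filter fun j => ξ j ≠ 0 with hSdef
  have hScard : S.card ≤ kβ := hsparse
  have hSξ : ∀ j, j ∉ S → ξ j = 0 := by
    intro j hj
    by_contra h
    exact hj (Finset.mem_filter.mpr ⟨Finset.mem_univ _, h⟩)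
  have hBdisj : Disjoint B B₀ := by rw [hBeq]; exact Finset.sdiff_disjoint
  have hBunion : B ∪ B₀ = Bq := by rw [hBeq]; exact Finset.sdiff_union_of_subset hB₀sub
  set X : ℝ := ∑ i ∈ B \ S, (e i)^2 with hXdef
  set Y : ℝ := ∑ i ∈ B₀ \ S, (e i)^2 with hYdef
  have hX0 : 0 ≤ X := Finset.sum_nonneg fun i _ => sq_nonneg _
  have hY0 : 0 ≤ Y := Finset.sum_nonneg fun i _ => sq_nonneg _
  have heq : ∀ (I : Finset (Fin m)), ∑ i ∈ I, (∑ j, d j * A i j)^2 = ∑ i ∈ I, (e i)^2 :=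
    fun I => rfl
  -- f1
  have hcastsub : ∀ (x y : ℕ), y ≤ x → ((x - y : ℕ):ℝ) = (x:ℝ) - y := fun x y h => by
    push_cast [h]; ring
  have f1 : aR * Q₀^2 ≤ X := by
    have hcard1 : kq - kq₀ - kβ ≤ (B \ S).card := by
      have := Finset.le_card_sdiff S B
      omega
    have h1 : ∀ i ∈ B \ S, Q₀^2 ≤ (e i)^2 := by
      intro i hi
      obtain ⟨hiB, hiS⟩ := Finset.mem_sdiff.mp hi
      have h2 := (hBQ i hiB).1
      have h3 : e i = - r i := by rw [hre i, hSξ i hiS]; ring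
      calc Q₀^2 ≤ |r i|^2 := pow_le_pow_left₀ hQ₀0 h2 2
        _ = (e i)^2 := by rw [h3, sq_abs, neg_sq]
    have h4 := Finset.card_nsmul_le_sum (B \ S) (fun i => (e i)^2) (Q₀^2) h1
    rw [nsmul_eq_mul] at h4
    have h5 : ((kq - kq₀ - kβ : ℕ):ℝ) ≤ ((B \ S).card:ℝ) := Nat.cast_le.mpr hcard1
    rw [hcastsub (kq - kq₀) kβ (by omega), hcastsub kq kq₀ (by omega)] at h5
    have h6 : aR * Q₀^2 ≤ ((B \ S).card:ℝ) * Q₀^2 :=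
      mul_le_mul_of_nonneg_right (by rw [haR]; linarith) (sq_nonneg _)
    linarith
  -- f2
  have f2 : σ1^2 * D ≤ X + Y := by
    have hcard2 : kq - kβ ≤ (Bq \ S).card := by
      have := Finset.le_card_sdiff S Bq
      omega
    have h1 := sigma_le_sum A (kq - kβ) (Bq \ S) hcard2 d
    rw [heq] at h1
    have hsplit : Bq \ S = (B \ S) ∪ (B₀ \ S) := by
      rw [← hBunion, Finset.union_sdiff_distrib]
    have hdisj2 : Disjoint (B \ S) (B₀ \ S) :=
      hBdisj.mono (Finset.sdiff_subset) (Finset.sdiff_subset)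
    rw [hsplit, Finset.sum_union hdisj2] at h1
    rw [hσ1, hD]
    exact h1
  -- f3
  have hB₀sq : ∀ i ∈ B₀ \ S, (e i)^2 ≤ Q₀^2 := by
    intro i hi
    obtain ⟨hiB₀, hiS⟩ := Finset.mem_sdiff.mp hi
    have h2 := hB₀Q i hiB₀
    have h3 : e i = - r i := by rw [hre i, hSξ i hiS]; ring
    calc (e i)^2 = |r i|^2 := by rw [h3, sq_abs, neg_sq]
      _ ≤ Q₀^2 := pow_le_pow_left₀ (abs_nonneg _) h2 2
  have f3 : Y ≤ (kq₀:ℝ) * Q₀^2 := by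
    have h4 := Finset.sum_le_card_nsmul (B₀ \ S) (fun i => (e i)^2) (Q₀^2) hB₀sq
    rw [nsmul_eq_mul] at h4
    refine h4.trans ?_
    apply mul_le_mul_of_nonneg_right _ (sq_nonneg _)
    have : (B₀ \ S).card ≤ kq₀ := by
      have := Finset.card_le_card (Finset.sdiff_subset (s := B₀) (t := S))
      omega
    exact_mod_cast this
  -- f4
  have f4 : σ2^2 * D ≤ (kq₀:ℝ) * Q₀^2 := by
    have hcard4 : kq₀ - kβ ≤ ((Finset.univ.filter fun j => |r j| ≤ Q₀) \ S).card := by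
      have := Finset.le_card_sdiff S (Finset.univ.filter fun j => |r j| ≤ Q₀)
      omega
    obtain ⟨F', hF'sub, hF'card⟩ := Finset.exists_subset_card_eq hcard4
    have h1 := sigma_le_sum A (kq₀ - kβ) F' (le_of_eq hF'card.symm) d
    rw [heq] at h1
    have h2 : ∀ i ∈ F', (e i)^2 ≤ Q₀^2 := by
      intro i hi
      obtain ⟨hiF, hiS⟩ := Finset.mem_sdiff.mp (hF'sub hi)
      have hrle := (Finset.mem_filter.mp hiF).2
      have h3 : e i = - r i := by rw [hre i, hSξ i hiS]; ring
      calc (e i)^2 = |r i|^2 := by rw [h3, sq_abs, neg_sq]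
        _ ≤ Q₀^2 := pow_le_pow_left₀ (abs_nonneg _) hrle 2
    have h4 := Finset.sum_le_card_nsmul F' (fun i => (e i)^2) (Q₀^2) h2
    rw [nsmul_eq_mul, hF'card] at h4
    have h5 : ((kq₀ - kβ : ℕ):ℝ) ≤ (kq₀:ℝ) := by
      rw [hcastsub kq₀ kβ (by omega)]; linarith
    rw [hσ2, hD]
    refine h1.trans (h4.trans ?_)
    exact mul_le_mul_of_nonneg_right h5 (sq_nonneg _)
  -- f5
  have f5 : WR * Q^2 ≤ σm^2 * D := by
    set G : Finset (Fin m) := (Finset.univ \ (Finset.univ.filter fun j => |r j| < Q)) \ S with hGdef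
    have hGcard : m - kq - kβ ≤ G.card := by
      have h1 := Finset.le_card_sdiff S (Finset.univ \ (Finset.univ.filter fun j => |r j| < Q))
      rw [← hGdef] at h1
      have h2 := Finset.card_sdiff_of_subset (Finset.subset_univ (Finset.univ.filter fun j => |r j| < Q))
      rw [Finset.card_univ, Fintype.card_fin] at h2
      omega
    have h3 : ∀ j ∈ G, Q^2 ≤ (e j)^2 := by
      intro j hj
      obtain ⟨hj1, hjS⟩ := Finset.mem_sdiff.mp hj
      have hj2 : ¬ (|r j| < Q) := by
        intro hc
        exact (Finset.mem_sdiff.mp hj1).2 (Finset.mem_filter.mpr ⟨Finset.mem_univ _, hc⟩)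
      push_neg at hj2
      have h4 : e j = - r j := by rw [hre j, hSξ j hjS]; ring
      calc Q^2 ≤ |r j|^2 := pow_le_pow_left₀ hQ0 hj2 2
        _ = (e j)^2 := by rw [h4, sq_abs, neg_sq]
    have h5 := Finset.card_nsmul_le_sum G (fun i => (e i)^2) (Q^2) h3
    rw [nsmul_eq_mul] at h5
    have h6 : ∑ i ∈ G, (e i)^2 ≤ σm^2 * D := by
      have := sum_le_sigmaMax A G d
      rw [heq] at this
      rw [hσm, hD]
      exact this
    have h7 : WR ≤ (G.card:ℝ) := by
      have := (Nat.cast_le (α := ℝ)).mpr hGcard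
      rw [hcastsub (m - kq) kβ (by omega), hcastsub m kq (by omega)] at this
      rw [hWR]; linarith
    have h8 : WR * Q^2 ≤ (G.card:ℝ) * Q^2 := mul_le_mul_of_nonneg_right h7 (sq_nonneg _)
    linarith
  -- f6
  have f6 : ∑ i ∈ B ∩ S, ((ξ i)^2 - (e i)^2) ≤ (kβ:ℝ) * (2*Q^2 + D) := by
    have h1 : ∀ i ∈ B ∩ S, (ξ i)^2 - (e i)^2 ≤ 2*Q^2 + D := by
      intro i hi
      have hiB := (Finset.mem_inter.mp hi).1
      have hrQ := (hBQ i hiB).2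
      have hξi : ξ i = r i + e i := by rw [hre i]; ring
      have h2 : (r i)^2 ≤ Q^2 := by
        calc (r i)^2 = |r i|^2 := (sq_abs _).symm
          _ ≤ Q^2 := pow_le_pow_left₀ (abs_nonneg _) hrQ 2
      have h3 : r i * e i ≤ Q * |e i| := by
        calc r i * e i ≤ |r i * e i| := le_abs_self _
          _ = |r i| * |e i| := abs_mul _ _
          _ ≤ Q * |e i| := mul_le_mul_of_nonneg_right hrQ (abs_nonneg _)
      have h4 : (e i)^2 ≤ D := heD i
      have h5 : |e i|^2 = (e i)^2 := sq_abs _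
      have key : (r i + e i)^2 - (e i)^2 = r i^2 + 2*(r i * e i) := by ring
      rw [hξi, key]
      linarith [sq_nonneg (Q - |e i|)]
    have h6 := Finset.sum_le_card_nsmul (B ∩ S) (fun i => (ξ i)^2 - (e i)^2) (2*Q^2 + D) h1
    rw [nsmul_eq_mul] at h6
    refine h6.trans ?_
    apply mul_le_mul_of_nonneg_right _ (by positivity)
    have : (B ∩ S).card ≤ kβ :=
      le_trans (Finset.card_le_card Finset.inter_subset_right) hScard
    exact_mod_cast this
  -- f7
  have f7 : ∑ i ∈ B, (e i)^2 - ∑ i ∈ B, (ξ i)^2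
      = X - ∑ i ∈ B ∩ S, ((ξ i)^2 - (e i)^2) := by
    have h1 := Finset.sum_inter_add_sum_sdiff B S (fun i => (e i)^2)
    have h2 := Finset.sum_inter_add_sum_sdiff B S (fun i => (ξ i)^2)
    have h3 : ∑ i ∈ B \ S, (ξ i)^2 = 0 :=
      Finset.sum_eq_zero fun i hi => by
        rw [hSξ i (Finset.mem_sdiff.mp hi).2]; ring
    have h4 : ∑ i ∈ B ∩ S, ((ξ i)^2 - (e i)^2)
        = ∑ i ∈ B ∩ S, (ξ i)^2 - ∑ i ∈ B ∩ S, (e i)^2 := Finset.sum_sub_distrib _ _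
    rw [hXdef]
    linarith
  -- central claim
  have hkqR2 : (kq:ℝ) = (kq₀:ℝ) + kβ + aR := by rw [haR]; ring
  have f12 : σ1^2 * D ≤ X + (kq₀:ℝ) * Q₀^2 := by linarith
  have central : aR * (kq₀:ℝ) * (σ1^2 * D) + aR * (σ2^2 * D) ≤ (kq:ℝ) * kq₀ * X := by
    rcases Nat.eq_zero_or_pos kβ with hkβz | hkβ1
    · -- kβ = 0
      have hkβR : (kβ:ℝ) = 0 := by rw [hkβz]; norm_num
      have hkqR : (kq:ℝ) = (kq₀:ℝ) + aR := by rw [hkqR2, hkβR]; ring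
      have hSempty : S = ∅ := Finset.card_eq_zero.mp (by omega)
      have hξ0 : ∀ j, ξ j = 0 := fun j => hSξ j (by rw [hSempty]; exact Finset.notMem_empty j)
      have hBS : B \ S = B := by rw [hSempty, Finset.sdiff_empty]
      have hB₀S : B₀ \ S = B₀ := by rw [hSempty, Finset.sdiff_empty]
      have hXB : X = ∑ i ∈ B, (e i)^2 := by rw [hXdef, hBS]
      have hYB : Y = ∑ i ∈ B₀, (e i)^2 := by rw [hYdef, hB₀S]
      have hσ2Y : σ2^2 * D ≤ Y := by
        have hc : kq₀ - kβ ≤ (B₀ \ S).card := by rw [hB₀S]; omega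
        have h1 := sigma_le_sum A (kq₀ - kβ) (B₀ \ S) hc d
        rw [heq] at h1
        rw [hσ2, hD]
        exact h1
      obtain ⟨j₀, hj₀⟩ := hsolve
      have hrj₀ : r j₀ = 0 := by rw [hrr]; simp [resid, hj₀]
      have hej₀ : e j₀ = 0 := by have h := hre j₀; rw [hξ0 j₀, hrj₀] at h; linarith
      rcases eq_or_lt_of_le hQ₀0 with hQz | hQpos
      · -- Q₀ = 0
        have ht0 : Q₀^2 = 0 := by rw [← hQz]; ring
        rw [ht0, mul_zero] at f3 f4
        have hσ1X : σ1^2*D ≤ X := by linarith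
        have hσ1D0 : 0 ≤ σ1^2*D := mul_nonneg (sq_nonneg _) hD0
        have haRkq : aR ≤ (kq:ℝ) := by rw [hkqR]; linarith
        have e1 : aR*(σ2^2*D) ≤ 0 := by
          have := mul_le_mul_of_nonneg_left f4 haR0
          simpa using this
        have e2 : aR*kq₀*(σ1^2*D) ≤ (kq:ℝ)*kq₀*(σ1^2*D) := by
          have h1 : aR*kq₀ ≤ (kq:ℝ)*kq₀ := mul_le_mul_of_nonneg_right haRkq hkq₀pos.le
          exact mul_le_mul_of_nonneg_right h1 hσ1D0
        have e3 : (kq:ℝ)*kq₀*(σ1^2*D) ≤ (kq:ℝ)*kq₀*X :=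
          mul_le_mul_of_nonneg_left hσ1X (by positivity)
        linarith
      · -- Q₀ > 0
        by_cases hj₀B : j₀ ∈ B
        · exfalso
          have h := (hBQ j₀ hj₀B).1
          rw [hrj₀, abs_zero] at h
          linarith
        · by_cases hj₀B₀ : j₀ ∈ B₀
          · -- j₀ ∈ B₀
            have hYle : Y ≤ ((kq₀:ℝ) - 1) * Q₀^2 := by
              rw [hYB]
              have hsum' : ∑ i ∈ B₀, (e i)^2 = ∑ i ∈ B₀.erase j₀, (e i)^2 + (e j₀)^2 :=
                (Finset.sum_erase_add B₀ _ hj₀B₀).symm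
              rw [hsum', hej₀]
              have h2 : ∀ i ∈ B₀.erase j₀, (e i)^2 ≤ Q₀^2 := fun i hi =>
                hB₀sq i (by rw [hB₀S]; exact Finset.mem_of_mem_erase hi)
              have h3 := Finset.sum_le_card_nsmul (B₀.erase j₀) _ _ h2
              rw [nsmul_eq_mul, Finset.card_erase_of_mem hj₀B₀, hB₀card,
                hcastsub kq₀ 1 (by omega)] at h3
              push_cast at h3 ⊢
              linarith only [h3]
            have P1 : 0 ≤ (kq₀:ℝ)*(kq₀:ℝ) * (X - aR*Q₀^2) :=
              mul_nonneg (mul_nonneg hkq₀pos.le hkq₀pos.le) (by linarith)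
            have P2 : 0 ≤ aR*(kq₀:ℝ) * (X + Y - σ1^2*D) :=
              mul_nonneg (mul_nonneg haR0 hkq₀pos.le) (by linarith)
            have P3 : 0 ≤ aR*(kq₀:ℝ) * (((kq₀:ℝ)-1)*Q₀^2 - Y) :=
              mul_nonneg (mul_nonneg haR0 hkq₀pos.le) (by linarith)
            have P4 : 0 ≤ aR * ((kq₀:ℝ)*Q₀^2 - σ2^2*D) :=
              mul_nonneg haR0 (by linarith)
            rw [hkqR]
            linarith only [P1, P2, P3, P4]
          · -- j₀ ∉ Bq
            have hj₀Bq : j₀ ∉ Bq := by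
              intro hc
              rw [← hBunion] at hc
              rcases Finset.mem_union.mp hc with h | h
              · exact hj₀B h
              · exact hj₀B₀ h
            have hswap : ∀ i ∈ B₀, σ1^2*D + (e i)^2 ≤ X + Y := by
              intro i hi
              have hiBq : i ∈ Bq := hB₀sub hi
              have hj₀e : j₀ ∉ Bq.erase i := fun hc => hj₀Bq (Finset.mem_of_mem_erase hc)
              have hcard' : (insert j₀ (Bq.erase i)).card = kq := by
                rw [Finset.card_insert_of_notMem hj₀e, Finset.card_erase_of_mem hiBq,
                  hBqcard]
                omega
              have h1 := sigma_le_sum A (kq - kβ) (insert j₀ (Bq.erase i))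
                (by rw [hcard']; omega) d
              rw [heq, Finset.sum_insert hj₀e, hej₀] at h1
              have h2 : ∑ i' ∈ Bq.erase i, (e i')^2 = ∑ i' ∈ Bq, (e i')^2 - (e i)^2 := by
                rw [← Finset.sum_erase_add Bq _ hiBq]; ring
              have h3 : ∑ i' ∈ Bq, (e i')^2 = X + Y := by
                rw [hXB, hYB, ← Finset.sum_union hBdisj, hBunion]
              rw [h2, h3] at h1
              have h4 : σ1^2 * D ≤ 0^2 + (X + Y - (e i)^2) := by
                rw [hσ1, hD]; exact h1
              linarith
            have hsum2 : (kq₀:ℝ) * (σ1^2*D) + Y ≤ (kq₀:ℝ)*(X+Y) := by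
              have h4 := Finset.sum_le_sum hswap
              rw [Finset.sum_add_distrib, Finset.sum_const, Finset.sum_const, hB₀card,
                nsmul_eq_mul, nsmul_eq_mul, ← hYB] at h4
              exact h4
            have hσ2Y' := hσ2Y
            have T1 : 0 ≤ (kq₀:ℝ)*(kq₀:ℝ)*(X - aR*Q₀^2) :=
              mul_nonneg (mul_nonneg hkq₀pos.le hkq₀pos.le) (by linarith)
            have T2 : 0 ≤ aR*((kq₀:ℝ)*(X+Y) - ((kq₀:ℝ)*(σ1^2*D) + Y)) :=
              mul_nonneg haR0 (by linarith)
            have T3 : 0 ≤ aR*(kq₀:ℝ)*((kq₀:ℝ)*Q₀^2 - Y) :=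
              mul_nonneg (mul_nonneg haR0 hkq₀pos.le) (by linarith)
            have T4 : 0 ≤ aR*(Y - σ2^2*D) := mul_nonneg haR0 (by linarith)
            rw [hkqR]
            linarith only [T1, T2, T3, T4]
    · -- kβ ≥ 1
      have hkβR1 : (1:ℝ) ≤ (kβ:ℝ) := by exact_mod_cast hkβ1
      have E1 : 0 ≤ ((kq₀:ℝ)*((kq₀:ℝ)+kβ))*(X - aR*Q₀^2) :=
        mul_nonneg (mul_nonneg hkq₀pos.le (by linarith)) (by linarith)
      have E2 : 0 ≤ (aR*kq₀)*(X + (kq₀:ℝ)*Q₀^2 - σ1^2*D) :=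
        mul_nonneg (mul_nonneg haR0 hkq₀pos.le) (by linarith)
      have E3 : 0 ≤ (aR*(kq₀:ℝ)*Q₀^2)*((kβ:ℝ) - 1) :=
        mul_nonneg (mul_nonneg (mul_nonneg haR0 hkq₀pos.le) (sq_nonneg _)) (by linarith)
      have E4 : 0 ≤ aR*((kq₀:ℝ)*Q₀^2 - σ2^2*D) := mul_nonneg haR0 (by linarith)
      rw [hkqR2]
      linarith only [E1, E2, E3, E4]
  -- relating C to the integer quantities
  have hqq₀pos : (0:ℝ) < q - q₀ := by linarith
  have h1qβ : (0:ℝ) < 1 - q - β := by linarith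
  have hgappos : (0:ℝ) < q - q₀ - β := by linarith
  have hMeq : (q - q₀) * (m:ℝ) = (kq:ℝ) - kq₀ := by rw [hkq, hkq₀]; ring
  have hMpos : (0:ℝ) < (kq:ℝ) - kq₀ := by rw [← hMeq]; positivity
  have hBcardR : ((B.card:ℕ):ℝ) = (kq:ℝ) - kq₀ := by
    rw [hBcard, hcastsub kq kq₀ (by omega)]
  have haRv : aR = (q - q₀ - β)*m := by rw [haR, hkq, hkq₀, hkβ]; ring
  have hWRv : WR = (1 - q - β)*m := by rw [hWR, hkq, hkβ]; ring
  have hσm2pos : (0:ℝ) < σm^2 := by positivity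
  have hCeq : ((kq:ℝ) - kq₀) * C = aR*σ1^2/kq + aR*σ2^2/((kq:ℝ)*kq₀) - kβ - 2*kβ*σm^2/WR := by
    rw [hC, haRv, hWRv, hkq, hkq₀, hkβ]
    field_simp
    ring
  have h1X : aR*σ1^2/kq*D + aR*σ2^2/((kq:ℝ)*kq₀)*D ≤ X := by
    have h2 : (aR*(kq₀:ℝ)*(σ1^2*D) + aR*(σ2^2*D)) / ((kq:ℝ)*kq₀) ≤ X := by
      rw [div_le_iff₀ (by positivity)]
      linarith only [central]
    refine le_trans (le_of_eq ?_) h2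
    field_simp
  have hQle : 2*(kβ:ℝ)*Q^2 ≤ 2*kβ*σm^2*D/WR := by
    rw [le_div_iff₀ hWRpos]
    have h9 := mul_le_mul_of_nonneg_left f5 (by positivity : (0:ℝ) ≤ 2*(kβ:ℝ))
    linarith only [h9]
  have key : ((kq:ℝ) - kq₀) * C * D ≤ ∑ i ∈ B, (e i)^2 - ∑ i ∈ B, (ξ i)^2 := by
    rw [f7]
    have hCD : ((kq:ℝ)-kq₀)*C*D
        = (aR*σ1^2/kq*D + aR*σ2^2/((kq:ℝ)*kq₀)*D) - kβ*D - 2*kβ*σm^2*D/WR := by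
      calc ((kq:ℝ)-kq₀)*C*D = (((kq:ℝ)-kq₀)*C)*D := by ring
        _ = (aR*σ1^2/kq + aR*σ2^2/((kq:ℝ)*kq₀) - kβ - 2*kβ*σm^2/WR)*D := by rw [hCeq]
        _ = _ := by ring
    rw [hCD]
    linarith
  constructor
  · -- part 1
    rw [hsum, hBcardR, hMeq, one_div, inv_mul_le_iff₀ hMpos]
    linarith only [key]
  · -- part 2
    intro hlt
    have hfac : (0:ℝ) < σm^2 * ((q-q₀-β)/q) := by positivity
    have h3 := mul_lt_mul_of_pos_right hlt hfac
    have hL : (q/(q-q₀-β)) * (β*(m:ℝ)/σm^2 + 2*β/(1-q-β)) * (σm^2*((q-q₀-β)/q))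
        = β*m + 2*β*σm^2/(1-q-β) := by
      field_simp
    have hR : ((σ1^2 + σ2^2/(q₀*(m:ℝ)))/σm^2) * (σm^2*((q-q₀-β)/q))
        = (σ1^2 + σ2^2/(q₀*(m:ℝ))) * ((q-q₀-β)/q) := by
      field_simp
    rw [hL, hR] at h3
    have hCform : C * ((q-q₀)*m)
        = (σ1^2 + σ2^2/(q₀*(m:ℝ)))*((q-q₀-β)/q) - (β*m + 2*β*σm^2/(1-q-β)) := by
      rw [hC]
      field_simp
    have hCpos : 0 < C * ((q-q₀)*m) := by rw [hCform]; linarith only [h3]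
    by_contra hc
    push_neg at hc
    have h5 : C * ((q-q₀)*m) ≤ 0 :=
      mul_nonpos_iff.mpr (Or.inr ⟨hc, by positivity⟩)
    linarith only [hCpos, h5]
end

section
/- Let β < q₀ < q < 1 − β with q₀m, qm, βm integers. Suppose A x* = b_t and b = b_t + η + ξ with ‖ξ‖₀ ≤ βm and supp(η) ∩ supp(ξ) = ∅. For any x_k ∈ ℝⁿ, if S := {j ∈ supp(ξ) : Q₀ ≤ |r_j| ≤ Q} is nonempty (with the paper's tie-breaking convention), then (1/|S|) Σ_{i∈S} ‖(x_k + r_i a_i) − x*‖² ≤ 2·(1 + σ_max(A)²/(m(1 − q − β)) + 2σ_max(A)/(√m·√(1 − q − β)))·‖x_k − x*‖² + 2(1 − q)·‖η‖_∞²/(1 − q − β). -/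
open Finset RealInnerProductSpace

set_option maxHeartbeats 1000000 in
theorem dqrk_eh_corrupt_rows_bound
    {m n : ℕ} (A : Matrix (Fin m) (Fin n) ℝ)
    (q₀ q β : ℝ) (kq₀ kq kβ : ℕ)
    (hm : 0 < m) (hmn : n ≤ m) (hrank : A.rank = n)
    (hrow : ∀ j, ∑ k, (A j k) ^ 2 = 1)
    (hβq₀ : β < q₀) (hq₀q : q₀ < q) (hq1 : q < 1 - β)
    (hkq₀ : (kq₀ : ℝ) = q₀ * m) (hkq : (kq : ℝ) = q * m) (hkβ : (kβ : ℝ) = β * m)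
    (xstar : EuclideanSpace ℝ (Fin n)) (bt b η ξ : Fin m → ℝ)
    (hsol : A.mulVec (fun k => xstar k) = bt)
    (hb : b = bt + η + ξ)
    (hsparse : (Finset.univ.filter fun j => ξ j ≠ 0).card ≤ kβ)
    (hdisj : ∀ j, η j = 0 ∨ ξ j = 0)
    (xk : EuclideanSpace ℝ (Fin n)) (Q₀ Q : ℝ)
    (hQ₀ : IsQuantile (fun j => |resid A b xk j|) kq₀ Q₀)
    (hQ : IsQuantile (fun j => |resid A b xk j|) kq Q)
    (S : Finset (Fin m))
    (hS : S = Finset.univ.filter fun j =>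
      ξ j ≠ 0 ∧ Q₀ ≤ |resid A b xk j| ∧ |resid A b xk j| ≤ Q)
    (hSne : S.Nonempty) :
    (1 / (S.card : ℝ)) * ∑ i ∈ S, ‖(xk + resid A b xk i • row A i) - xstar‖ ^ 2 ≤
      2 * (1 + sigmaMax A ^ 2 / (m * (1 - q - β)) +
          2 * sigmaMax A / (Real.sqrt m * Real.sqrt (1 - q - β))) * ‖xk - xstar‖ ^ 2 +
        2 * (1 - q) * ‖η‖ ^ 2 / (1 - q - β) := by
  classical
  have hm' : (0:ℝ) < m := by exact_mod_cast hm
  have hc2 : (0:ℝ) < 1 - q - β := by linarith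
  have hβ0 : (0:ℝ) ≤ β := by
    have h0 : (0:ℝ) ≤ (kβ : ℝ) := Nat.cast_nonneg _
    rw [hkβ] at h0; exact (mul_nonneg_iff_of_pos_right hm').mp h0
  set u : EuclideanSpace ℝ (Fin n) := xk - xstar with hu
  set E := ‖u‖ with hE
  have hE0 : 0 ≤ E := norm_nonneg _
  set h := ‖η‖ with hh
  have hh0 : 0 ≤ h := norm_nonneg _
  set σ := sigmaMax A with hσ
  have hσ0 : 0 ≤ σ := norm_nonneg _
  set D := Real.sqrt m * Real.sqrt (1 - q - β) with hD
  have hD0 : 0 < D := by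
    apply mul_pos (Real.sqrt_pos.mpr hm') (Real.sqrt_pos.mpr hc2)
  have hD2 : D ^ 2 = m * (1 - q - β) := by
    rw [hD, mul_pow, Real.sq_sqrt hm'.le, Real.sq_sqrt hc2.le]
  -- the inner products with the rows
  set G : Fin m → ℝ := fun j => ∑ k, (xk k - xstar k) * A j k with hG
  have hresid : ∀ j, resid A b xk j = η j + ξ j - G j := by
    intro j
    have hbt : bt j = ∑ k, A j k * xstar k := by
      rw [← hsol]; simp [Matrix.mulVec, dotProduct]
    have hsum : G j = ∑ k, xk k * A j k - ∑ k, A j k * xstar k := by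
      rw [hG, ← Finset.sum_sub_distrib]
      exact Finset.sum_congr rfl fun k _ => by ring
    simp only [resid, hb, Pi.add_apply, hbt, hsum]
    ring
  have hrow1 : ∀ j, ‖row A j‖ = 1 := by
    intro j
    rw [EuclideanSpace.norm_eq]
    have : ∑ k, ‖row A j k‖ ^ 2 = 1 := by
      rw [← hrow j]
      exact Finset.sum_congr rfl fun k _ => by
        simp [row, Real.norm_eq_abs, sq_abs]
    rw [this, Real.sqrt_one]
  have hinner : ∀ j, ⟪u, row A j⟫ = G j := by
    intro j
    rw [PiLp.inner_apply, hG]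
    exact Finset.sum_congr rfl fun k _ => by
      simp [row, hu, PiLp.sub_apply, RCLike.inner_apply, mul_comm]
  have hGle : ∀ j, |G j| ≤ E := by
    intro j
    rw [← hinner j]
    calc |⟪u, row A j⟫| ≤ ‖u‖ * ‖row A j‖ := abs_real_inner_le_norm _ _
      _ = E := by rw [hrow1 j, mul_one]
  -- operator norm bound on ∑ G j ^ 2
  have hAe : ∑ j, (G j) ^ 2 ≤ σ ^ 2 * E ^ 2 := by
    set T := LinearMap.toContinuousLinearMap (Matrix.toEuclideanLin A) with hT
    have hTu : ∀ j, T u j = G j := by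
      intro j
      show Matrix.toEuclideanLin A u j = G j
      rw [Matrix.toEuclideanLin_apply, PiLp.toLp_apply]
      simp only [Matrix.mulVec, dotProduct, hG]
      refine Finset.sum_congr rfl fun k _ => ?_
      simp [hu, PiLp.sub_apply, mul_comm]
    have hTnorm : ‖T u‖ ^ 2 = ∑ j, (G j) ^ 2 := by
      rw [EuclideanSpace.norm_eq, Real.sq_sqrt (by positivity)]
      exact Finset.sum_congr rfl fun j _ => by
        rw [hTu j, Real.norm_eq_abs, sq_abs]
    have hop : ‖T u‖ ≤ σ * E := by
      have := T.le_opNorm u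
      simpa [hσ, sigmaMax, hT, hE] using this
    calc ∑ j, (G j) ^ 2 = ‖T u‖ ^ 2 := hTnorm.symm
      _ ≤ (σ * E) ^ 2 := by
          apply pow_le_pow_left₀ (norm_nonneg _) hop
      _ = σ ^ 2 * E ^ 2 := by ring
  -- Q is nonnegative
  have hQ0 : 0 ≤ Q := by
    obtain ⟨i, hi⟩ := hSne
    rw [hS, Finset.mem_filter] at hi
    exact le_trans (abs_nonneg _) hi.2.2.2
  -- counting: many uncorrupted rows have residual ≥ Q
  set U : Finset (Fin m) :=
    (Finset.univ.filter fun j => ¬ |resid A b xk j| < Q) \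
      (Finset.univ.filter fun j => ξ j ≠ 0) with hUdef
  have hUmem : ∀ j ∈ U, ξ j = 0 ∧ Q ≤ |resid A b xk j| := by
    intro j hj
    rw [hUdef, Finset.mem_sdiff, Finset.mem_filter, Finset.mem_filter] at hj
    refine ⟨?_, not_lt.mp hj.1.2⟩
    by_contra hne
    exact hj.2 ⟨Finset.mem_univ _, hne⟩
  have hUcard : (m : ℝ) * (1 - q - β) < U.card := by
    have hsplit : ((Finset.univ : Finset (Fin m)).filter fun j => |resid A b xk j| < Q).card +
        ((Finset.univ : Finset (Fin m)).filter fun j => ¬ |resid A b xk j| < Q).card = m := by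
      rw [Finset.card_filter_add_card_filter_not]
      simp
    have hsub : ((Finset.univ : Finset (Fin m)).filter fun j => ¬ |resid A b xk j| < Q) ⊆
        U ∪ (Finset.univ.filter fun j => ξ j ≠ 0) := by
      intro j hj
      rw [Finset.mem_union, hUdef, Finset.mem_sdiff]
      by_cases hξ : j ∈ (Finset.univ.filter fun j => ξ j ≠ 0)
      · exact Or.inr hξ
      · exact Or.inl ⟨hj, hξ⟩
    have h1 : ((Finset.univ : Finset (Fin m)).filter fun j => ¬ |resid A b xk j| < Q).card ≤
        U.card + kβ := by
      calc _ ≤ (U ∪ (Finset.univ.filter fun j => ξ j ≠ 0)).card := Finset.card_le_card hsub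
        _ ≤ U.card + (Finset.univ.filter fun j => ξ j ≠ 0).card := Finset.card_union_le _ _
        _ ≤ U.card + kβ := by omega
    have h2 : ((Finset.univ : Finset (Fin m)).filter fun j => |resid A b xk j| < Q).card + 1 ≤ kq :=
      hQ.2
    have hmle : m ≤ U.card + kβ + kq - 1 := by omega
    have hmler : (m : ℝ) ≤ (U.card : ℝ) + kβ + kq - 1 := by
      have : (m : ℝ) ≤ ((U.card + kβ + kq - 1 : ℕ) : ℝ) := by exact_mod_cast hmle
      have hge : (1:ℕ) ≤ U.card + kβ + kq := by omega
      rw [Nat.cast_sub hge] at this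
      push_cast at this ⊢
      linarith
    rw [hkβ, hkq] at hmler
    linarith
  -- quantile bound : Q ≤ h + σ E / D
  have hQle : Q ≤ h + σ * E / D := by
    rcases le_or_gt Q h with hcase | hcase
    · have : 0 ≤ σ * E / D := by positivity
      linarith
    · have hQh : 0 < Q - h := by linarith
      have hperU : ∀ j ∈ U, (Q - h) ^ 2 ≤ (G j) ^ 2 := by
        intro j hj
        obtain ⟨hξ0, hQj⟩ := hUmem j hj
        have hr : resid A b xk j = η j - G j := by rw [hresid j, hξ0]; ring
        have hηj : |η j| ≤ h := by
          have := norm_le_pi_norm η j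
          simpa [Real.norm_eq_abs, hh] using this
        have habs : Q - h ≤ |G j| := by
          have : |resid A b xk j| ≤ |η j| + |G j| := by
            rw [hr]; exact abs_sub _ _
          linarith
        calc (Q - h) ^ 2 ≤ |G j| ^ 2 := by
              apply pow_le_pow_left₀ hQh.le habs
          _ = (G j) ^ 2 := sq_abs _
      have hsumU : (U.card : ℝ) * (Q - h) ^ 2 ≤ σ ^ 2 * E ^ 2 := by
        have h1 : U.card • ((Q - h) ^ 2) ≤ ∑ j ∈ U, (G j) ^ 2 :=
          Finset.card_nsmul_le_sum U _ _ hperU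
        rw [nsmul_eq_mul] at h1
        calc (U.card : ℝ) * (Q - h) ^ 2 ≤ ∑ j ∈ U, (G j) ^ 2 := h1
          _ ≤ ∑ j, (G j) ^ 2 := Finset.sum_le_sum_of_subset_of_nonneg
              (Finset.subset_univ U) (fun j _ _ => sq_nonneg _)
          _ ≤ σ ^ 2 * E ^ 2 := hAe
      by_contra hcon
      push_neg at hcon
      have hx : σ * E < (Q - h) * D := by
        rw [← div_lt_iff₀ hD0]
        linarith
      have h5 : (σ * E) ^ 2 < ((Q - h) * D) ^ 2 := by
        apply pow_lt_pow_left₀ hx (by positivity)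
        norm_num
      have h6 : ((Q - h) * D) ^ 2 = (Q - h) ^ 2 * (m * (1 - q - β)) := by
        rw [mul_pow, hD2]
      have h7 : (Q - h) ^ 2 * ((m:ℝ) * (1 - q - β)) < (Q - h) ^ 2 * U.card :=
        mul_lt_mul_of_pos_left hUcard (pow_pos hQh 2)
      have h8 : (σ * E) ^ 2 = σ ^ 2 * E ^ 2 := by ring
      have h9 : (Q - h) ^ 2 * (U.card : ℝ) = (U.card : ℝ) * (Q - h) ^ 2 := mul_comm _ _
      linarith
  -- per-element bound on the update
  have key : ∀ i ∈ S, ‖(xk + resid A b xk i • row A i) - xstar‖ ^ 2 ≤ (Q + E) ^ 2 := by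
    intro i hi
    rw [hS, Finset.mem_filter] at hi
    obtain ⟨-, hξ, hQ₀i, hQi⟩ := hi
    set r := resid A b xk i with hr
    have heq : (xk + r • row A i) - xstar = u + r • row A i := by
      rw [hu]; abel
    rw [heq, norm_add_sq_real, real_inner_smul_right, hinner i]
    have hn : ‖r • row A i‖ ^ 2 = r ^ 2 := by
      rw [norm_smul, mul_pow, hrow1 i, Real.norm_eq_abs, sq_abs, one_pow, mul_one]
    rw [hn]
    have h1 : |r * G i| ≤ Q * E := by
      rw [abs_mul]
      exact mul_le_mul hQi (hGle i) (abs_nonneg _) hQ0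
    have h2 : r * G i ≤ Q * E := le_trans (le_abs_self _) h1
    have h3 : r ^ 2 ≤ Q ^ 2 := by
      calc r ^ 2 = |r| ^ 2 := (sq_abs _).symm
        _ ≤ Q ^ 2 := pow_le_pow_left₀ (abs_nonneg _) hQi 2
    have h4 : (Q + E) ^ 2 = Q ^ 2 + 2 * (Q * E) + E ^ 2 := by ring
    linarith
  -- average over S
  have hcard : 0 < ((S.card : ℕ) : ℝ) := by
    exact_mod_cast Finset.card_pos.mpr hSne
  have hL : (1 / (S.card : ℝ)) * ∑ i ∈ S, ‖(xk + resid A b xk i • row A i) - xstar‖ ^ 2 ≤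
      (Q + E) ^ 2 := by
    rw [one_div, inv_mul_le_iff₀ hcard]
    have := Finset.sum_le_card_nsmul S _ _ key
    rw [nsmul_eq_mul] at this
    exact this
  refine le_trans hL ?_
  -- final algebra
  have hsig : σ ^ 2 / (m * (1 - q - β)) = (σ / D) ^ 2 := by
    rw [div_pow, hD2]
  rw [hsig]
  set s := σ / D with hs
  have hs0 : 0 ≤ s := by positivity
  have hQle' : Q ≤ h + s * E := by
    have : σ * E / D = s * E := by rw [hs]; ring
    rw [← this]; exact hQle
  have hβh : 2 * h ^ 2 ≤ 2 * (1 - q) * h ^ 2 / (1 - q - β) := by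
    rw [le_div_iff₀ hc2]
    have : 0 ≤ β * h ^ 2 := mul_nonneg hβ0 (sq_nonneg h)
    linarith
  have hst : Q + E ≤ h + (1 + s) * E := by
    have hexp : (1 + s) * E = E + s * E := by ring
    linarith
  have st1 : (Q + E) ^ 2 ≤ (h + (1 + s) * E) ^ 2 :=
    pow_le_pow_left₀ (by linarith) hst 2
  have st2 : (h + (1 + s) * E) ^ 2 ≤ 2 * h ^ 2 + 2 * (1 + s) ^ 2 * E ^ 2 := by
    have h10 : 0 ≤ (h - (1 + s) * E) ^ 2 := sq_nonneg _
    have h11 : (h + (1 + s) * E) ^ 2 + (h - (1 + s) * E) ^ 2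
        = 2 * h ^ 2 + 2 * (1 + s) ^ 2 * E ^ 2 := by ring
    linarith
  have goal_eq : 2 * (1 + s ^ 2 + 2 * σ / D) * E ^ 2 = 2 * (1 + s) ^ 2 * E ^ 2 - 4 * s * E ^ 2
      + 4 * (σ / D) * E ^ 2 := by
    rw [hs]; ring
  have hfin : 2 * σ / D = 2 * s := by rw [hs]; ring
  calc (Q + E) ^ 2 ≤ 2 * h ^ 2 + 2 * (1 + s) ^ 2 * E ^ 2 := le_trans st1 st2
    _ ≤ 2 * (1 + s ^ 2 + 2 * σ / D) * E ^ 2 + 2 * (1 - q) * h ^ 2 / (1 - q - β) := by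
        rw [hfin]
        have h12 : 2 * (1 + s ^ 2 + 2 * s) * E ^ 2 = 2 * (1 + s) ^ 2 * E ^ 2 := by ring
        linarith
end

section
/- Let β < q₀ < q < 1 − β with q₀m, qm and βm integers. Suppose A x* = b_t and b = b_t + ξ with ‖ξ‖₀ ≤ βm. For any x_k ∈ ℝⁿ, if the set S := {j ∈ supp(ξ) : Q₀ ≤ |r_j| ≤ Q} is nonempty (with the paper's tie-breaking convention), then (1/|S|) Σ_{i∈S} ‖(x_k + r_i a_i) − x*‖² ≤ 2·(1 + σ_max(A)²/(m(1 − q − β)))·‖x_k − x*‖². -/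
set_option maxHeartbeats 1000000

open Finset

private lemma euclid_norm_sq {p : ℕ} (v : EuclideanSpace ℝ (Fin p)) :
    ‖v‖ ^ 2 = ∑ k, v k ^ 2 := by
  rw [EuclideanSpace.norm_eq, Real.sq_sqrt (by positivity)]
  simp [sq_abs]

theorem dqrk_corrupt_rows_bound
    {m n : ℕ} (A : Matrix (Fin m) (Fin n) ℝ)
    (q₀ q β : ℝ) (kq₀ kq kβ : ℕ)
    (hm : 0 < m) (hmn : n ≤ m) (hrank : A.rank = n)
    (hrow : ∀ j, ∑ k, (A j k) ^ 2 = 1)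
    (hβq₀ : β < q₀) (hq₀q : q₀ < q) (hq1 : q < 1 - β)
    (hkq₀ : (kq₀ : ℝ) = q₀ * m) (hkq : (kq : ℝ) = q * m) (hkβ : (kβ : ℝ) = β * m)
    (xstar : EuclideanSpace ℝ (Fin n)) (bt b ξ : Fin m → ℝ)
    (hsol : A.mulVec (fun k => xstar k) = bt)
    (hb : b = bt + ξ)
    (hsparse : (Finset.univ.filter fun j => ξ j ≠ 0).card ≤ kβ)
    (xk : EuclideanSpace ℝ (Fin n)) (Q₀ Q : ℝ)
    (hQ₀ : IsQuantile (fun j => |resid A b xk j|) kq₀ Q₀)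
    (hQ : IsQuantile (fun j => |resid A b xk j|) kq Q)
    (S : Finset (Fin m))
    (hS : S = Finset.univ.filter fun j =>
      ξ j ≠ 0 ∧ Q₀ ≤ |resid A b xk j| ∧ |resid A b xk j| ≤ Q)
    (hSne : S.Nonempty) :
    (1 / (S.card : ℝ)) * ∑ i ∈ S, ‖(xk + resid A b xk i • row A i) - xstar‖ ^ 2 ≤
      2 * (1 + sigmaMax A ^ 2 / (m * (1 - q - β))) * ‖xk - xstar‖ ^ 2 := by
  classical
  set e : EuclideanSpace ℝ (Fin n) := xk - xstar with he
  set g : Fin m → ℝ := fun j => ∑ k, e k * A j k with hg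
  have hnormsq : ∀ v : EuclideanSpace ℝ (Fin n), ‖v‖ ^ 2 = ∑ k, v k ^ 2 :=
    fun v => euclid_norm_sq v
  have hek : ∀ k, e k = xk k - xstar k := fun k => rfl
  have hresid : ∀ j, resid A b xk j = ξ j - g j := by
    intro j
    have hbt : bt j = ∑ k, A j k * xstar k := by
      rw [← hsol]; rfl
    simp only [resid, hb, Pi.add_apply, hbt, hg, hek]
    have hexp : ∑ k, (xk k - xstar k) * A j k
        = ∑ k, xk k * A j k - ∑ k, A j k * xstar k := by
      rw [← Finset.sum_sub_distrib]
      apply Finset.sum_congr rfl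
      intro k _
      ring
    rw [hexp]
    ring
  -- Q is nonnegative
  obtain ⟨i₀, hi₀⟩ := hSne
  have hi₀' := hi₀
  rw [hS, Finset.mem_filter] at hi₀'
  have hQ0 : 0 ≤ Q := le_trans (abs_nonneg _) hi₀'.2.2.2
  -- positivity of denominator
  have hD : (0:ℝ) < m * (1 - q - β) := by
    have : (0:ℝ) < m := by exact_mod_cast hm
    nlinarith
  set D : ℝ := m * (1 - q - β) with hDdef
  set σ : ℝ := sigmaMax A with hσdef
  -- operator norm bound
  have hσ : ∑ j, g j ^ 2 ≤ σ ^ 2 * ‖e‖ ^ 2 := by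
    have hle := (LinearMap.toContinuousLinearMap (Matrix.toEuclideanLin A)).le_opNorm e
    have hnn : 0 ≤ ‖LinearMap.toContinuousLinearMap (Matrix.toEuclideanLin A)‖ := norm_nonneg _
    have hsq : ‖(LinearMap.toContinuousLinearMap (Matrix.toEuclideanLin A)) e‖ ^ 2 ≤ σ ^ 2 * ‖e‖ ^ 2 := by
      rw [hσdef, sigmaMax]
      nlinarith [norm_nonneg ((LinearMap.toContinuousLinearMap (Matrix.toEuclideanLin A)) e), norm_nonneg e]
    have hcoord : ‖(LinearMap.toContinuousLinearMap (Matrix.toEuclideanLin A)) e‖ ^ 2 = ∑ j, g j ^ 2 := by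
      rw [euclid_norm_sq]
      apply Finset.sum_congr rfl
      intro j _
      have : ((LinearMap.toContinuousLinearMap (Matrix.toEuclideanLin A)) e) j
          = ∑ k, A j k * e k := rfl
      rw [this, hg]
      congr 1
      apply Finset.sum_congr rfl
      intro k _
      ring
    linarith [hcoord ▸ hsq]
  -- the set of uncorrupted rows with large residuals
  set T : Finset (Fin m) := Finset.univ.filter fun j => ξ j = 0 ∧ Q ≤ |resid A b xk j| with hT
  have hTcard : D ≤ (T.card : ℝ) := by
    have hcompl : Finset.univ.filter (fun j => ¬(ξ j = 0 ∧ Q ≤ |resid A b xk j|)) ⊆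
        (Finset.univ.filter fun j => ξ j ≠ 0) ∪
        (Finset.univ.filter fun j => |resid A b xk j| < Q) := by
      intro j hj
      rw [Finset.mem_filter] at hj
      rw [Finset.mem_union, Finset.mem_filter, Finset.mem_filter]
      by_cases hξ : ξ j = 0
      · right
        refine ⟨Finset.mem_univ _, ?_⟩
        by_contra h
        exact hj.2 ⟨hξ, not_lt.mp h⟩
      · exact Or.inl ⟨Finset.mem_univ _, hξ⟩
    have h1 : (Finset.univ.filter (fun j => ¬(ξ j = 0 ∧ Q ≤ |resid A b xk j|))).card
        ≤ kβ + (Finset.univ.filter fun j => |resid A b xk j| < Q).card :=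
      le_trans (Finset.card_le_card hcompl)
        (le_trans (Finset.card_union_le _ _) (by gcongr))
    have h2 : (Finset.univ.filter fun j => |resid A b xk j| < Q).card < kq := hQ.2
    have h3 := Finset.card_filter_add_card_filter_not
      (s := (Finset.univ : Finset (Fin m))) (p := fun j => ξ j = 0 ∧ Q ≤ |resid A b xk j|)
    rw [Finset.card_univ, Fintype.card_fin] at h3
    have h4 : T.card + (Finset.univ.filter
        (fun j => ¬(ξ j = 0 ∧ Q ≤ |resid A b xk j|))).card = m := h3
    have hnat : m ≤ T.card + kβ +
        (Finset.univ.filter fun j => |resid A b xk j| < Q).card := by omega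
    have h2' : ((Finset.univ.filter fun j => |resid A b xk j| < Q).card : ℝ) + 1 ≤ (kq:ℝ) := by
      exact_mod_cast Nat.succ_le_of_lt h2
    have hnatR : (m:ℝ) ≤ (T.card : ℝ) + (kβ:ℝ) +
        ((Finset.univ.filter fun j => |resid A b xk j| < Q).card : ℝ) := by
      exact_mod_cast hnat
    have hm' : (m:ℝ) ≤ (T.card : ℝ) + (kβ:ℝ) + (kq:ℝ) - 1 := by
      linarith
    have hexp : (m:ℝ) * (1 - q - β) = (m:ℝ) - q * m - β * m := by ring
    rw [hDdef, hexp]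
    linarith [hm', hkq, hkβ]
  -- Q² bound
  have hgT : ∀ j ∈ T, Q ^ 2 ≤ g j ^ 2 := by
    intro j hj
    rw [hT, Finset.mem_filter] at hj
    have h1 : Q ≤ |g j| := by
      have := hj.2.2
      rw [hresid j, hj.2.1] at this
      simpa [abs_neg] using this
    calc Q ^ 2 ≤ |g j| ^ 2 := pow_le_pow_left₀ hQ0 h1 2
      _ = g j ^ 2 := sq_abs _
  have hQD : Q ^ 2 * D ≤ σ ^ 2 * ‖e‖ ^ 2 := by
    have h1 : (T.card : ℝ) * Q ^ 2 ≤ ∑ j ∈ T, g j ^ 2 := by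
      have := Finset.card_nsmul_le_sum T (fun j => g j ^ 2) (Q ^ 2) hgT
      simpa [nsmul_eq_mul] using this
    have h2 : ∑ j ∈ T, g j ^ 2 ≤ ∑ j, g j ^ 2 :=
      Finset.sum_le_sum_of_subset_of_nonneg (Finset.subset_univ _)
        (fun j _ _ => sq_nonneg _)
    have h0 : Q ^ 2 * D ≤ Q ^ 2 * (T.card : ℝ) :=
      mul_le_mul_of_nonneg_left hTcard (sq_nonneg Q)
    calc Q ^ 2 * D ≤ Q ^ 2 * (T.card : ℝ) := h0
      _ = (T.card : ℝ) * Q ^ 2 := mul_comm _ _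
      _ ≤ ∑ j ∈ T, g j ^ 2 := h1
      _ ≤ ∑ j, g j ^ 2 := h2
      _ ≤ σ ^ 2 * ‖e‖ ^ 2 := hσ
  -- per-term bound
  have hterm : ∀ i ∈ S, ‖(xk + resid A b xk i • row A i) - xstar‖ ^ 2
      ≤ 2 * ‖e‖ ^ 2 + 2 * Q ^ 2 := by
    intro i hi
    rw [hS, Finset.mem_filter] at hi
    have hri : |resid A b xk i| ≤ Q := hi.2.2.2
    have hr2 : resid A b xk i ^ 2 ≤ Q ^ 2 := by
      nlinarith [abs_nonneg (resid A b xk i), sq_abs (resid A b xk i)]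
    set r : ℝ := resid A b xk i with hr
    have hcoord : ∀ k, ((xk + r • row A i) - xstar) k = e k + r * A i k := by
      intro k
      simp [row, hek, PiLp.sub_apply, PiLp.add_apply, PiLp.smul_apply, smul_eq_mul]
      ring
    rw [hnormsq, hnormsq]
    calc ∑ k, (((xk + r • row A i) - xstar) k) ^ 2
        = ∑ k, (e k + r * A i k) ^ 2 := by
          apply Finset.sum_congr rfl; intro k _; rw [hcoord k]
      _ ≤ ∑ k, (2 * e k ^ 2 + 2 * r ^ 2 * A i k ^ 2) := by
          apply Finset.sum_le_sum; intro k _; nlinarith [sq_nonneg (e k - r * A i k)]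
      _ = 2 * ∑ k, e k ^ 2 + 2 * r ^ 2 * ∑ k, A i k ^ 2 := by
          rw [Finset.sum_add_distrib, ← Finset.mul_sum, ← Finset.mul_sum]
      _ = 2 * ∑ k, e k ^ 2 + 2 * r ^ 2 := by rw [hrow i]; ring
      _ ≤ 2 * ∑ k, e k ^ 2 + 2 * Q ^ 2 := by linarith
  -- sum up
  have hcardpos : (0:ℝ) < S.card := by
    have : 0 < S.card := Finset.card_pos.mpr ⟨i₀, hi₀⟩
    exact_mod_cast this
  have hsum : ∑ i ∈ S, ‖(xk + resid A b xk i • row A i) - xstar‖ ^ 2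
      ≤ (S.card : ℝ) * (2 * ‖e‖ ^ 2 + 2 * Q ^ 2) := by
    calc ∑ i ∈ S, ‖(xk + resid A b xk i • row A i) - xstar‖ ^ 2
        ≤ ∑ i ∈ S, (2 * ‖e‖ ^ 2 + 2 * Q ^ 2) := Finset.sum_le_sum hterm
      _ = (S.card : ℝ) * (2 * ‖e‖ ^ 2 + 2 * Q ^ 2) := by
          rw [Finset.sum_const, nsmul_eq_mul]
  have hmain : (1 / (S.card : ℝ)) * ∑ i ∈ S, ‖(xk + resid A b xk i • row A i) - xstar‖ ^ 2
      ≤ 2 * ‖e‖ ^ 2 + 2 * Q ^ 2 := by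
    rw [div_mul_eq_mul_div, one_mul, div_le_iff₀ hcardpos]
    linarith [hsum]
  have hQfinal : 2 * Q ^ 2 ≤ 2 * (σ ^ 2 * ‖e‖ ^ 2 / D) := by
    have : Q ^ 2 ≤ σ ^ 2 * ‖e‖ ^ 2 / D := by
      rw [le_div_iff₀ hD]
      exact hQD
    linarith
  have hrhs : 2 * (1 + σ ^ 2 / D) * ‖e‖ ^ 2
      = 2 * ‖e‖ ^ 2 + 2 * (σ ^ 2 * ‖e‖ ^ 2 / D) := by
    field_simp
  calc (1 / (S.card : ℝ)) * ∑ i ∈ S, ‖(xk + resid A b xk i • row A i) - xstar‖ ^ 2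
      ≤ 2 * ‖e‖ ^ 2 + 2 * Q ^ 2 := hmain
    _ ≤ 2 * ‖e‖ ^ 2 + 2 * (σ ^ 2 * ‖e‖ ^ 2 / D) := by linarith
    _ = 2 * (1 + σ ^ 2 / D) * ‖e‖ ^ 2 := hrhs.symm
end
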